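/- Every addable abstract numeration system is comparable, and every comparable abstract numeration system is regular. -/

import Mathlib

open scoped BigOperators

/-- A language is regular if it is accepted by a DFA with finitely many states. -/
def IsRegularLang {α : Type*} (L : Set (List α)) : Prop :=
  ∃ (σ : Type) (_ : Fintype σ) (M : DFA α σ), ∀ w : List α, w ∈ M.accepts ↔ w ∈ L

/-- Pad a word over `A` to length `M` by prepending the padding symbol `none`. -/
def padOne {A : Type*} (M : ℕ) (w : List A) : List (Option A) :=
  List.replicate (M - w.length) none ++ w.map some

/-- The padded form of a `d`-tuple of words over `A`, as a word over `(A ∪ {#})^d`. -/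
def padTuple {A : Type*} {d : ℕ} (ws : Fin d → List A) : List (Fin d → Option A) :=
  List.ofFn fun j : Fin (Finset.univ.sup fun i : Fin d => (ws i).length) =>
    fun i : Fin d =>
      (padOne (Finset.univ.sup fun i : Fin d => (ws i).length) (ws i)).getD j.val none

/-- An abstract numeration system over the alphabet `A`, encoded by the order isomorphism
`rep : ℕ → L ⊆ A*` enumerating its (infinite) language in increasing order. -/
structure ANS (A : Type*) where
  rep : ℕ → List A
  inj : Function.Injective rep

/-- A set `Y ⊆ ℕ^d` is `S`-recognizable if the padded representations of its members form
a regular language. -/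
def ANS.Recognizable {A : Type*} (S : ANS A) {d : ℕ} (Y : Set (Fin d → ℕ)) : Prop :=
  IsRegularLang { w : List (Fin d → Option A) | ∃ t ∈ Y, w = padTuple fun i => S.rep (t i) }

/-- An ANS is addable if the graph of addition is `S`-recognizable. -/
def ANS.Addable {A : Type*} (S : ANS A) : Prop :=
  S.Recognizable { t : Fin 3 → ℕ | t 0 + t 1 = t 2 }

/-- An ANS is comparable if the relation `≤` is `S`-recognizable. -/
def ANS.Comparable {A : Type*} (S : ANS A) : Prop :=
  S.Recognizable { t : Fin 2 → ℕ | t 0 ≤ t 1 }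

/-- An ANS is regular if `ℕ` (i.e. its language) is `S`-recognizable. -/
def ANS.IsRegularANS {A : Type*} (S : ANS A) : Prop :=
  S.Recognizable (Set.univ : Set (Fin 1 → ℕ))

/-- The unary ANS, with language `0*` ordered by length. -/
def unaryANS : ANS Unit where
  rep := fun n => List.replicate n ()
  inj := fun m n h => by simpa using congrArg List.length h

/-- `x` is `S`-automatic: some DFAO outputs `x n` on input `rep_S n`. -/
def SAutomatic {A C : Type*} (S : ANS A) (x : ℕ → C) : Prop :=
  ∃ (Q : Type) (_ : Fintype Q) (M : DFA A Q) (τ : Q → C),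
    ∀ n : ℕ, τ (M.eval (S.rep n)) = x n

/-- The shift map on one-sided infinite words. -/
def shiftMap {C : Type*} (x : ℕ → C) : ℕ → C := fun n => x (n + 1)

/-- The orbit closure of `x` (closure in the product topology over the discrete alphabet):
`y` belongs to it iff every finite prefix of `y` occurs in `x`. -/
def orbitClosure {C : Type*} (x : ℕ → C) : Set (ℕ → C) :=
  { y | ∀ n : ℕ, ∃ m : ℕ, ∀ i < n, y i = x (m + i) }

/-- A subshift: a shift-invariant subset of `C^ℕ` that is closed in the product topology
over the discrete alphabet (expressed combinatorially). -/
def IsSubshift {C : Type*} (X : Set (ℕ → C)) : Prop :=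
  (∀ x ∈ X, shiftMap x ∈ X) ∧
  ∀ y : ℕ → C, (∀ n : ℕ, ∃ x ∈ X, ∀ i < n, y i = x i) → y ∈ X

/-- The language of a set of infinite words: all finite factors of its elements. -/
def LangOf {C : Type*} (X : Set (ℕ → C)) : Set (List C) :=
  { w | ∃ x ∈ X, ∃ p : ℕ, w = List.ofFn fun i : Fin w.length => x (p + i) }

/-- A word is right special in (the language of) `X` if it has two distinct one-letter
extensions in the language of `X`. -/
def RightSpecial {C : Type*} (X : Set (ℕ → C)) (w : List C) : Prop :=
  ∃ a b : C, a ≠ b ∧ w ++ [a] ∈ LangOf X ∧ w ++ [b] ∈ LangOf X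

/-- The factor complexity of `x`: the number of distinct factors of length `n`. -/
noncomputable def factorComplexity {C : Type*} (x : ℕ → C) (n : ℕ) : ℕ :=
  Set.ncard { w : List C | ∃ p : ℕ, w = List.ofFn fun i : Fin n => x (p + i) }

/-- `T` is a strategy tree witnessing `α ∈ W(X)`: a prefix-closed set of finite words
containing the empty word, in which every word of length `i` has exactly `α i + 1`
one-letter extensions, and all whose infinite branches lie in `X`. -/
def IsStrategyTree {C : Type*} (X : Set (ℕ → C)) (α : ℕ → ℕ) (T : Set (List C)) : Prop :=
  ([] : List C) ∈ T ∧
  (∀ u v : List C, u ++ v ∈ T → u ∈ T) ∧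
  (∀ w ∈ T, Set.ncard { c : C | w ++ [c] ∈ T } = α w.length + 1) ∧
  (∀ y : ℕ → C, (∀ n : ℕ, (List.ofFn fun i : Fin n => y i) ∈ T) → y ∈ X)

/-- The winning shift of `X ⊆ C^ℕ`, a subset of `ℕ^ℕ`. -/
def winningShift {C : Type*} (X : Set (ℕ → C)) : Set (ℕ → ℕ) :=
  { α | ∃ T : Set (List C), IsStrategyTree X α T }

/-- Membership in the winning set of a set `X` of finite words, defined recursively:
`ε ∈ W(X)` iff `ε ∈ X`, and `a :: α ∈ W(X)` iff there is a set of `a + 1` letters `c`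
such that `α` is in the winning set of the left quotient of `X` by `c`. -/
def winningSetMem {C : Type*} : List ℕ → Set (List C) → Prop
  | [], X => [] ∈ X
  | a :: α, X => ∃ S : Finset C, S.card = a + 1 ∧ ∀ c ∈ S, winningSetMem α { w | c :: w ∈ X }

/-- `Σ y = m`: the sum of the letters of `y ∈ ℕ^ℕ` is finite and equals `m`. -/
def sumEq (y : ℕ → ℕ) (m : ℕ) : Prop :=
  (Function.support y).Finite ∧ ∑ᶠ i, y i = m

/-- `Y ⊆ ℕ^ℕ` has finite coding dimension: the sums `Σ y`, `y ∈ Y`, are uniformly bounded. -/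
def FiniteCodingDim (Y : Set (ℕ → ℕ)) : Prop :=
  ∃ d : ℕ, ∀ y ∈ Y, ∀ F : Finset ℕ, ∑ i ∈ F, y i ≤ d

/-- The set `{ν(y) : y ∈ Y, Σy = k} ⊆ ℕᵏ`: nondecreasing `k`-tuples `t` such that the word
whose letter at `j` is the number of occurrences of `j` in `t` belongs to `Y`. -/
def nuSet (Y : Set (ℕ → ℕ)) (k : ℕ) : Set (Fin k → ℕ) :=
  { t | Monotone t ∧ (fun j => Set.ncard { i : Fin k | t i = j }) ∈ Y }

/-- `Y ⊆ ℕ^ℕ` is weakly `S`-codable if `{ν(y) : y ∈ Y, Σy = k}` is `S`-recognizable for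
every `k`. -/
def WeaklySCodable {A : Type*} (S : ANS A) (Y : Set (ℕ → ℕ)) : Prop :=
  ∀ k : ℕ, S.Recognizable (nuSet Y k)

/-- `Y ⊆ ℕ^ℕ` is `S`-codable if it is weakly `S`-codable and has finite coding dimension. -/
def SCodable {A : Type*} (S : ANS A) (Y : Set (ℕ → ℕ)) : Prop :=
  WeaklySCodable S Y ∧ FiniteCodingDim Y

/-- `P_{111}(Y)`: strictly increasing triples `(a, b, c)` such that the word with letter `1`
exactly at positions `a`, `b`, `c` and `0` elsewhere belongs to `Y`. -/
def P111 (Y : Set (ℕ → ℕ)) : Set (Fin 3 → ℕ) :=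
  { t | t 0 < t 1 ∧ t 1 < t 2 ∧
        (fun j => if j = t 0 ∨ j = t 1 ∨ j = t 2 then 1 else 0) ∈ Y }

/-- `P_v(Y)` for a finite word `v` over `ℕ`: strictly increasing tuples `n` such that the
word with letter `v i` at position `n i` and `0` elsewhere belongs to `Y`. -/
def PvSet (v : List ℕ) (Y : Set (ℕ → ℕ)) : Set (Fin v.length → ℕ) :=
  { n | StrictMono n ∧
        (fun j => ∑ i : Fin v.length, if n i = j then v.get i else 0) ∈ Y }

/-- `X` is sofic: the set of label sequences of right-infinite paths in a finite
edge-labeled graph. -/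
def IsSofic {C : Type*} (X : Set (ℕ → C)) : Prop :=
  ∃ (V : Type) (_ : Fintype V) (E : Set (V × C × V)),
    X = { x | ∃ p : ℕ → V, ∀ n : ℕ, (p n, x n, p (n + 1)) ∈ E }

/-- The factor `x[a..b-1]` of an infinite word. -/
def segmentOf {C : Type*} (x : ℕ → C) (a b : ℕ) : List C :=
  List.ofFn fun i : Fin (b - a) => x (a + i)

/-- `U · V^ω`: infinite words that decompose as a word of `U` followed by infinitely many
nonempty words of `V`. -/
def omegaIter {C : Type*} (U V : Set (List C)) : Set (ℕ → C) :=
  { x | ∃ k : ℕ → ℕ, StrictMono k ∧ segmentOf x 0 (k 0) ∈ U ∧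
        ∀ i : ℕ, segmentOf x (k i) (k (i + 1)) ∈ V }

/-- `X ⊆ C^ℕ` is ω-regular: a finite union of sets `U · V^ω` with `U`, `V` regular. -/
def IsOmegaRegular {C : Type*} (X : Set (ℕ → C)) : Prop :=
  ∃ (n : ℕ) (U V : Fin n → Set (List C)),
    (∀ i, IsRegularLang (U i) ∧ IsRegularLang (V i)) ∧
    X = ⋃ i, omegaIter (U i) (V i)

/-- The words `p₁ = a`, `p_{k+1} = p_k bᵏ p_k` (with `a = false`, `b = true`). -/
def pWord : ℕ → List Bool
  | 0 => []
  | 1 => [false]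
  | (k + 2) => pWord (k + 1) ++ List.replicate (k + 1) true ++ pWord (k + 1)

/-- Combinatorial continuity of `φ` on `Y` for product topologies over discrete alphabets:
every finite prefix of `φ y` is determined by a finite prefix of `y`. -/
def ContOn {B C : Type*} (φ : (ℕ → B) → (ℕ → C)) (Y : Set (ℕ → B)) : Prop :=
  ∀ y ∈ Y, ∀ n : ℕ, ∃ m : ℕ, ∀ y' ∈ Y, (∀ i < m, y' i = y i) → ∀ i < n, φ y' i = φ y i

namespace Stmt4


lemma padOne_length {A : Type*} {M : ℕ} {w : List A} (h : w.length ≤ M) :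
    (padOne M w).length = M := by
  simp [padOne]; omega

lemma padOne_split {A : Type*} {M P : ℕ} {w : List A} (h1 : w.length ≤ P) (h2 : P ≤ M) :
    padOne M w = List.replicate (M - P) (none : Option A) ++ padOne P w := by
  unfold padOne
  rw [← List.append_assoc, ← List.replicate_add]
  congr 2
  omega

lemma col_shift {A : Type*} {M P : ℕ} {w : List A} (h1 : w.length ≤ P) (h2 : P ≤ M) (j : ℕ) :
    (padOne M w).getD (M - P + j) none = (padOne P w).getD j none := by
  rw [padOne_split h1 h2, List.getD_append_right _ _ _ _ (by simp)]
  congr 1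
  simp

lemma padOne_filterMap {A : Type*} (M : ℕ) (w : List A) :
    (padOne M w).filterMap id = w := by
  simp [padOne, List.filterMap_map]

lemma padOne_getD_none {A : Type*} {M j : ℕ} {w : List A} (h : j < M - w.length) :
    (padOne M w).getD j none = none := by
  unfold padOne
  rw [List.getD_append _ _ _ j (by simpa using h)]
  rw [List.getD_eq_getElem _ _ (by simpa using h)]
  simp

lemma padOne_getD_some {A : Type*} {M j : ℕ} {w : List A} (h1 : w.length ≤ M)
    (h2 : M - w.length ≤ j) (h3 : j < M) :
    (padOne M w).getD j none ≠ none := by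
  unfold padOne
  rw [List.getD_append_right _ _ _ _ (by simpa using h2)]
  rw [List.getD_eq_getElem _ _ (by simp; omega)]
  simp

lemma padTuple_length {A : Type*} {d : ℕ} (ws : Fin d → List A) :
    (padTuple ws).length = Finset.univ.sup fun i : Fin d => (ws i).length := by
  simp [padTuple]

lemma padTuple_getElem {A : Type*} {d : ℕ} (ws : Fin d → List A) (j : ℕ)
    (hj : j < (padTuple ws).length) :
    (padTuple ws)[j] =
      fun i : Fin d =>
        (padOne (Finset.univ.sup fun i : Fin d => (ws i).length) (ws i)).getD j none := by
  simp [padTuple]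

lemma sup_comp_le {A : Type*} {d e : ℕ} (ws : Fin d → List A) (π : Fin e → Fin d) :
    (Finset.univ.sup fun i : Fin e => (ws (π i)).length) ≤
      Finset.univ.sup fun i : Fin d => (ws i).length :=
  Finset.sup_le fun i _ =>
    Finset.le_sup (f := fun i : Fin d => (ws i).length) (Finset.mem_univ (π i))

lemma padG {A : Type*} {d e : ℕ} (ws : Fin d → List A) (π : Fin e → Fin d) :
    (List.drop ((Finset.univ.sup fun i : Fin d => (ws i).length)
        - (Finset.univ.sup fun i : Fin e => (ws (π i)).length)) (padTuple ws)).map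
        (fun ℓ => ℓ ∘ π)
      = padTuple (ws ∘ π) := by
  set M := Finset.univ.sup fun i : Fin d => (ws i).length with hM
  set P := Finset.univ.sup fun i : Fin e => (ws (π i)).length with hP
  have hPM : P ≤ M := sup_comp_le ws π
  have hlen : (padTuple (ws ∘ π)).length = P := by
    rw [padTuple_length]
    simp only [Function.comp]
    rfl
  apply List.ext_getElem
  · rw [List.length_map, List.length_drop, padTuple_length, hlen, ← hM]; omega
  · intro j h1 h2
    have hjP : j < P := by rwa [hlen] at h2
    have hd : M - P + j < (padTuple ws).length := by rw [padTuple_length, ← hM]; omega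
    rw [List.getElem_map, List.getElem_drop, padTuple_getElem ws _ (by omega)]
    rw [padTuple_getElem (ws ∘ π) j h2]
    funext i
    simp only [Function.comp]
    rw [← hM, ← hP]
    exact col_shift (Finset.le_sup (f := fun i : Fin e => (ws (π i)).length)
      (Finset.mem_univ i)) hPM j

/-- Letters of a padded tuple in the padding zone of component `i` are `none`. -/
lemma padTuple_comp_none {A : Type*} {d : ℕ} (ws : Fin d → List A) (i : Fin d) {k : ℕ}
    (hk : k < (Finset.univ.sup fun i : Fin d => (ws i).length) - (ws i).length)
    (h2 : k < (padTuple ws).length) : (padTuple ws)[k] i = none := by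
  rw [padTuple_getElem]
  exact padOne_getD_none hk

/-- Letters of a padded tuple past the padding zone of component `i` are `some`. -/
lemma padTuple_comp_some {A : Type*} {d : ℕ} (ws : Fin d → List A) (i : Fin d) {k : ℕ}
    (hk : (Finset.univ.sup fun i : Fin d => (ws i).length) - (ws i).length ≤ k)
    (h2 : k < (padTuple ws).length) : (padTuple ws)[k] i ≠ none := by
  rw [padTuple_getElem]
  refine padOne_getD_some (Finset.le_sup (f := fun i => (ws i).length) (Finset.mem_univ i)) hk ?_
  rwa [padTuple_length] at h2

def pr : Fin 2 → Fin 3 := ![0, 2]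

lemma pr0 : pr 0 = 0 := rfl
lemma pr1 : pr 1 = 2 := rfl


lemma padTuple_getD {A : Type*} {d : ℕ} (ws : Fin d → List A) (k : ℕ)
    (hk : k < Finset.univ.sup fun i : Fin d => (ws i).length) :
    (padTuple ws).getD k (fun _ => none) =
      fun i : Fin d =>
        (padOne (Finset.univ.sup fun i : Fin d => (ws i).length) (ws i)).getD k none := by
  rw [List.getD_eq_getElem _ _ (by rw [padTuple_length]; exact hk)]
  exact padTuple_getElem ws k (by rw [padTuple_length]; exact hk)

lemma padTuple_getD_none {A : Type*} {d : ℕ} (ws : Fin d → List A) (i : Fin d) {k : ℕ}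
    (hk : k < (Finset.univ.sup fun i : Fin d => (ws i).length) - (ws i).length) :
    (padTuple ws).getD k (fun _ => none) i = none := by
  rw [padTuple_getD ws k (by omega)]
  exact padOne_getD_none hk

lemma padTuple_getD_some {A : Type*} {d : ℕ} (ws : Fin d → List A) (i : Fin d) {k : ℕ}
    (hk : (Finset.univ.sup fun i : Fin d => (ws i).length) - (ws i).length ≤ k)
    (h2 : k < Finset.univ.sup fun i : Fin d => (ws i).length) :
    (padTuple ws).getD k (fun _ => none) i ≠ none := by
  rw [padTuple_getD ws k h2]
  exact padOne_getD_some (Finset.le_sup (f := fun i => (ws i).length) (Finset.mem_univ i))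
    hk h2

/-- The key combinatorial equivalence for addable → comparable. -/
lemma key23 {A : Type} (S : ANS A) (v : List (Fin 2 → Option A)) :
    ((∃ u₀ : List (Fin 3 → Option A), (∀ ℓ ∈ u₀, ℓ 0 = none ∧ ℓ 2 = none) ∧
        ∃ u : List (Fin 3 → Option A), u.map (· ∘ pr) = v ∧
          (∃ t : Fin 3 → ℕ, t 0 + t 1 = t 2 ∧
            u₀ ++ u = padTuple fun i => S.rep (t i))) ∧
      (∀ b l, v = b :: l → ¬ (b 0 = none ∧ b 1 = none)))
    ↔ ∃ t : Fin 2 → ℕ, t 0 ≤ t 1 ∧ v = padTuple fun i => S.rep (t i) := by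
  constructor
  · rintro ⟨⟨u₀, hu₀, u, hu, t₃, ht₃, hw⟩, hhead⟩
    subst hu
    set M := Finset.univ.sup fun i : Fin 3 => (S.rep (t₃ i)).length with hM
    set P := Finset.univ.sup fun i : Fin 2 => (S.rep (t₃ (pr i))).length with hP
    have hPM : P ≤ M := sup_comp_le (fun i => S.rep (t₃ i)) pr
    have hle2 : ∀ i : Fin 2, (S.rep (t₃ (pr i))).length ≤ P :=
      fun i => hP ▸ Finset.le_sup (f := fun i : Fin 2 => (S.rep (t₃ (pr i))).length)
        (Finset.mem_univ i)
    have hWlen : (padTuple fun i => S.rep (t₃ i)).length = M := by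
      rw [padTuple_length]
    have hsum : u₀.length + u.length = M := by
      rw [← hWlen, ← hw]; simp
    obtain ⟨istar, -, hPi⟩ := Finset.exists_mem_eq_sup (Finset.univ : Finset (Fin 2))
      Finset.univ_nonempty (fun i => (S.rep (t₃ (pr i))).length)
    rw [← hP] at hPi
    -- Claim 1 : u₀.length ≤ M - P
    have hcl1 : u₀.length ≤ M - P := by
      by_contra hcon
      push_neg at hcon
      have hPpos : 0 < P := by omega
      have hgd : (u₀ ++ u).getD (M - P) (fun _ => none) = u₀.getD (M - P) (fun _ => none) :=
        List.getD_append _ _ _ _ hcon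
      have hmem : u₀.getD (M - P) (fun _ => none) ∈ u₀ := by
        rw [List.getD_eq_getElem _ _ hcon]
        exact List.getElem_mem _
      obtain ⟨h0, h2⟩ := hu₀ _ hmem
      have hsome : (padTuple fun i => S.rep (t₃ i)).getD (M - P) (fun _ => none)
          (pr istar) ≠ none := by
        refine padTuple_getD_some _ (pr istar) ?_ (by rw [← hM]; omega)
        rw [← hM, ← hPi]
      rw [← hw, hgd] at hsome
      rcases istar with ⟨(_ | _ | n), hn⟩
      · exact hsome h0
      · exact hsome h2
      · omega
    -- Claim 2 : M - P ≤ u₀.length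
    have hcl2 : M - P ≤ u₀.length := by
      by_contra hcon
      push_neg at hcon
      have hulen : 0 < u.length := by omega
      obtain ⟨ℓ, u', hu'⟩ := List.exists_cons_of_ne_nil (List.ne_nil_of_length_pos hulen)
      have hℓ : (u₀ ++ u).getD u₀.length (fun _ => none) = ℓ := by
        rw [List.getD_append_right _ _ _ _ le_rfl, Nat.sub_self, hu']
        rfl
      rw [hw] at hℓ
      have hn0 : ℓ 0 = none := by
        rw [← hℓ]
        refine padTuple_getD_none _ 0 ?_
        have h0le : (S.rep (t₃ 0)).length ≤ P := hle2 0
        rw [← hM]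
        omega
      have hn2 : ℓ 2 = none := by
        rw [← hℓ]
        refine padTuple_getD_none _ 2 ?_
        have h2le : (S.rep (t₃ 2)).length ≤ P := hle2 1
        rw [← hM]
        omega
      refine hhead (ℓ ∘ pr) (u'.map (· ∘ pr)) (by rw [hu']; rfl) ⟨?_, ?_⟩
      · exact hn0
      · exact hn2
    have hk₀ : u₀.length = M - P := le_antisymm hcl1 hcl2
    refine ⟨![t₃ 0, t₃ 2], by simp; omega, ?_⟩
    have hdrop : u = List.drop (M - P) (padTuple fun i => S.rep (t₃ i)) := by
      rw [← hw, ← hk₀, List.drop_left]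
    rw [hdrop, hM, hP]
    rw [padG (fun i => S.rep (t₃ i)) pr]
    congr 1
    funext i
    fin_cases i <;> rfl
  · rintro ⟨t, ht, hv⟩
    subst hv
    set t₃ : Fin 3 → ℕ := ![t 0, t 1 - t 0, t 1] with ht₃
    have hws : (fun i => S.rep (t₃ i)) ∘ pr = fun i => S.rep (t i) := by
      funext i
      fin_cases i <;> simp [pr, ht₃]
    set M := Finset.univ.sup fun i : Fin 3 => (S.rep (t₃ i)).length with hM
    set P := Finset.univ.sup fun i : Fin 2 => (S.rep (t₃ (pr i))).length with hP
    have hPM : P ≤ M := sup_comp_le (fun i => S.rep (t₃ i)) pr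
    have hle2 : ∀ i : Fin 2, (S.rep (t₃ (pr i))).length ≤ P :=
      fun i => hP ▸ Finset.le_sup (f := fun i : Fin 2 => (S.rep (t₃ (pr i))).length)
        (Finset.mem_univ i)
    constructor
    · refine ⟨List.take (M - P) (padTuple fun i => S.rep (t₃ i)), ?_,
        List.drop (M - P) (padTuple fun i => S.rep (t₃ i)), ?_,
        t₃, by simp [ht₃]; omega, by rw [List.take_append_drop]⟩
      · intro ℓ hℓ
        rw [List.mem_iff_getElem] at hℓ
        obtain ⟨k, hk, hℓk⟩ := hℓ
        have hkMP : k < M - P := by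
          simp [List.length_take] at hk
          omega
        have hkM : k < M := by omega
        have hℓW : (padTuple fun i => S.rep (t₃ i)).getD k (fun _ => none) = ℓ := by
          rw [← hℓk, List.getD_eq_getElem _ _
            (by simp only [List.length_take] at hk ⊢; exact hk.trans_le (min_le_right _ _))]
          exact List.getElem_take.symm
        constructor
        · rw [← hℓW]
          refine padTuple_getD_none _ 0 ?_
          have h0le : (S.rep (t₃ 0)).length ≤ P := hle2 0
          rw [← hM]
          omega
        · rw [← hℓW]
          refine padTuple_getD_none _ 2 ?_
          have h2le : (S.rep (t₃ 2)).length ≤ P := hle2 1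
          rw [← hM]
          omega
      · rw [hM, hP, padG (fun i => S.rep (t₃ i)) pr, hws]
    · intro b l hbl
      rintro ⟨hb0, hb1⟩
      have hppos : 0 < (padTuple fun i => S.rep (t i)).length := by
        rw [hbl]; simp
      have hppos' : 0 < Finset.univ.sup fun i : Fin 2 => (S.rep (t i)).length := by
        rwa [padTuple_length] at hppos
      have hb : (padTuple fun i => S.rep (t i)).getD 0 (fun _ => none) = b := by
        rw [hbl]; rfl
      obtain ⟨istar, -, hPi⟩ := Finset.exists_mem_eq_sup (Finset.univ : Finset (Fin 2))
        Finset.univ_nonempty (fun i => (S.rep (t i)).length)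
      have hsome : (padTuple fun i => S.rep (t i)).getD 0 (fun _ => none) istar ≠ none := by
        refine padTuple_getD_some _ istar ?_ hppos'
        rw [← hPi]
        omega
      rw [hb] at hsome
      rcases istar with ⟨(_ | _ | n), hn⟩
      · exact hsome hb0
      · exact hsome hb1
      · omega

def pi21 : Fin 2 → Fin 1 := fun _ => 0

lemma dup_injective {A : Type} : Function.Injective (fun c : Fin 1 → Option A => c ∘ pi21) := by
  intro c c' h
  funext i
  have h0 := congrFun h 0
  rw [Subsingleton.elim i 0]
  exact h0

lemma padG1 {A : Type} (w : List A) :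
    (padTuple fun _ : Fin 1 => w).map (· ∘ pi21) = padTuple fun _ : Fin 2 => w := by
  have h : (Finset.univ.sup fun _ : Fin 1 => w.length) = w.length :=
    Finset.sup_const Finset.univ_nonempty _
  have h' : (Finset.univ.sup fun _ : Fin 2 => w.length) = w.length :=
    Finset.sup_const Finset.univ_nonempty _
  have key := padG (fun _ : Fin 1 => w) pi21
  simp only [h, h', Nat.sub_self, List.drop_zero] at key
  exact key

/-- The key combinatorial equivalence for comparable → regular. -/
lemma key12 {A : Type} (S : ANS A) (v : List (Fin 1 → Option A)) :
    (∃ t : Fin 2 → ℕ, t 0 ≤ t 1 ∧ v.map (· ∘ pi21) = padTuple fun i => S.rep (t i))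
    ↔ ∃ t : Fin 1 → ℕ, v = padTuple fun i => S.rep (t i) := by
  constructor
  · rintro ⟨t, ht, hmap⟩
    set P := Finset.univ.sup fun i : Fin 2 => (S.rep (t i)).length with hP
    have hle : ∀ i : Fin 2, (S.rep (t i)).length ≤ P :=
      fun i => hP ▸ Finset.le_sup (f := fun i : Fin 2 => (S.rep (t i)).length)
        (Finset.mem_univ i)
    have hvlen : v.length = P := by
      have := congrArg List.length hmap
      rwa [List.length_map, padTuple_length, ← hP] at this
    have heq : padOne P (S.rep (t 0)) = padOne P (S.rep (t 1)) := by
      apply List.ext_getElem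
      · rw [padOne_length (hle 0), padOne_length (hle 1)]
      · intro j h1 h2
        have hjP : j < P := by rwa [padOne_length (hle 0)] at h1
        have hlet : (padTuple fun i => S.rep (t i)).getD j (fun _ => none) =
            (v.getD j (fun _ => none)) ∘ pi21 := by
          rw [← hmap, List.getD_eq_getElem _ _ (by rw [List.length_map, hvlen]; exact hjP),
            List.getElem_map, List.getD_eq_getElem _ _ (by rw [hvlen]; exact hjP)]
        rw [padTuple_getD _ j (hP ▸ hjP)] at hlet
        have c0 := congrFun hlet 0
        have c1 := congrFun hlet 1
        rw [← List.getD_eq_getElem _ none h1, ← List.getD_eq_getElem _ none h2]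
        rw [← hP] at c0 c1
        rw [c0, c1]
        rfl
    have hrep : S.rep (t 0) = S.rep (t 1) := by
      rw [← padOne_filterMap P (S.rep (t 0)), ← padOne_filterMap P (S.rep (t 1)), heq]
    have ht01 : t 0 = t 1 := S.inj hrep
    refine ⟨fun _ => t 0, ?_⟩
    apply List.map_injective_iff.mpr (dup_injective (A := A))
    rw [hmap, show (fun i : Fin 1 => S.rep ((fun _ : Fin 1 => t 0) i))
        = fun _ : Fin 1 => S.rep (t 0) from rfl, padG1 (S.rep (t 0))]
    congr 1
    funext i
    rcases i with ⟨(_ | _ | n), hn⟩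
    · rfl
    · exact congrArg S.rep ht01.symm
    · omega
  · rintro ⟨t, hv⟩
    subst hv
    refine ⟨fun _ => t 0, le_rfl, ?_⟩
    have h0 : (fun i : Fin 1 => S.rep (t i)) = fun _ : Fin 1 => S.rep (t 0) := by
      funext i
      rw [Subsingleton.elim i 0]
    rw [h0, padG1]


/-- Preimage DFA under a letter map. -/
def dfaComap {β γ σ : Type*} (M : DFA γ σ) (f : β → γ) : DFA β σ :=
  ⟨fun q b => M.step q (f b), M.start, M.accept⟩

lemma dfaComap_evalFrom {β γ σ : Type*} (M : DFA γ σ) (f : β → γ) (s : σ) (w : List β) :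
    (dfaComap M f).evalFrom s w = M.evalFrom s (w.map f) := by
  induction w generalizing s with
  | nil => rfl
  | cons a l ih => exact ih _

lemma dfaComap_accepts {β γ σ : Type*} (M : DFA γ σ) (f : β → γ) (w : List β) :
    w ∈ (dfaComap M f).accepts ↔ w.map f ∈ M.accepts := by
  rw [DFA.mem_accepts, DFA.mem_accepts]
  show (dfaComap M f).evalFrom (dfaComap M f).start w ∈ M.accept ↔ _
  rw [dfaComap_evalFrom]
  rfl

/-- Product (intersection) DFA. -/
def dfaInter {β σ₁ σ₂ : Type*} (M₁ : DFA β σ₁) (M₂ : DFA β σ₂) : DFA β (σ₁ × σ₂) :=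
  ⟨fun q b => (M₁.step q.1 b, M₂.step q.2 b), (M₁.start, M₂.start),
   {q | q.1 ∈ M₁.accept ∧ q.2 ∈ M₂.accept}⟩

lemma dfaInter_evalFrom {β σ₁ σ₂ : Type*} (M₁ : DFA β σ₁) (M₂ : DFA β σ₂)
    (s₁ : σ₁) (s₂ : σ₂) (w : List β) :
    (dfaInter M₁ M₂).evalFrom (s₁, s₂) w = (M₁.evalFrom s₁ w, M₂.evalFrom s₂ w) := by
  induction w generalizing s₁ s₂ with
  | nil => rfl
  | cons a l ih => exact ih _ _

lemma dfaInter_accepts {β σ₁ σ₂ : Type*} (M₁ : DFA β σ₁) (M₂ : DFA β σ₂) (w : List β) :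
    w ∈ (dfaInter M₁ M₂).accepts ↔ w ∈ M₁.accepts ∧ w ∈ M₂.accepts := by
  rw [DFA.mem_accepts, DFA.mem_accepts, DFA.mem_accepts]
  show (dfaInter M₁ M₂).evalFrom ((M₁.start, M₂.start)) w ∈ _ ↔ _
  rw [dfaInter_evalFrom]
  exact Iff.rfl

open Classical in
/-- DFA rejecting exactly the nonempty words whose first letter is "bad". -/
noncomputable def dfaHead {β : Type*} (bad : β → Prop) : DFA β (Option Bool) :=
  ⟨fun q b => some (q.getD (decide (bad b))), none, {none, some false}⟩

lemma dfaHead_evalFrom {β : Type*} (bad : β → Prop) (x : Bool) (w : List β) :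
    (dfaHead bad).evalFrom (some x) w = some x := by
  induction w with
  | nil => rfl
  | cons a l ih => exact ih

open Classical in
lemma dfaHead_accepts {β : Type*} (bad : β → Prop) (w : List β) :
    w ∈ (dfaHead bad).accepts ↔ ∀ b l, w = b :: l → ¬ bad b := by
  cases w with
  | nil =>
    constructor
    · rintro - b l h; cases h
    · intro _; rw [DFA.mem_accepts]; left; rfl
  | cons b l =>
    rw [DFA.mem_accepts]
    show (dfaHead bad).evalFrom (some (decide (bad b))) l ∈ _ ↔ _
    rw [dfaHead_evalFrom]
    constructor
    · rintro (h | h) b' l' hbl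
      · cases h
      · injection hbl with e1 e2
        subst e1
        have : decide (bad b) = false := by simpa using h
        simpa using this
    · intro h
      right
      have : ¬ bad b := h b l rfl
      simp [this]


variable {A : Type} {Q : Type}

lemma lift_comp (c : Fin 2 → Option A) (b : Option A) :
    (![c 0, b, c 1] : Fin 3 → Option A) ∘ pr = c := by
  funext i
  fin_cases i <;> simp [pr]

lemma comp_eq_iff (ℓ : Fin 3 → Option A) (c : Fin 2 → Option A) :
    ℓ ∘ pr = c ↔ ∃ b, ℓ = ![c 0, b, c 1] := by
  constructor
  · intro h
    refine ⟨ℓ 1, ?_⟩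
    have h0 := congrFun h 0
    have h1 := congrFun h 1
    simp only [Function.comp, pr] at h0 h1
    funext i
    fin_cases i <;> simp_all [pr]
  · rintro ⟨b, rfl⟩
    exact lift_comp c b

/-- NFA projecting away the middle component, with hidden leading padding. -/
def projNFA (M3 : DFA (Fin 3 → Option A) Q) : NFA (Fin 2 → Option A) Q where
  step q c := { q' | ∃ b : Option A, q' = M3.step q ![c 0, b, c 1] }
  start := { q | ∃ u : List (Fin 3 → Option A),
      (∀ ℓ ∈ u, ℓ 0 = none ∧ ℓ 2 = none) ∧ q = M3.evalFrom M3.start u }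
  accept := M3.accept

lemma projNFA_evalFrom (M3 : DFA (Fin 3 → Option A) Q) (v : List (Fin 2 → Option A))
    (S : Set Q) (q' : Q) :
    q' ∈ (projNFA M3).evalFrom S v ↔
      ∃ q ∈ S, ∃ u : List (Fin 3 → Option A),
        u.map (· ∘ pr) = v ∧ q' = M3.evalFrom q u := by
  induction v generalizing S with
  | nil =>
    rw [NFA.evalFrom_nil]
    constructor
    · intro h
      exact ⟨q', h, [], by simp, rfl⟩
    · rintro ⟨q, hq, u, hu, rfl⟩
      rw [List.map_eq_nil_iff] at hu
      subst hu
      exact hq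
  | cons c v ih =>
    show q' ∈ (projNFA M3).evalFrom ((projNFA M3).stepSet S c) v ↔ _
    rw [ih]
    constructor
    · rintro ⟨q₁, hq₁, u', hu', rfl⟩
      rw [NFA.mem_stepSet] at hq₁
      rcases hq₁ with ⟨q, hq, b, rfl⟩
      exact ⟨q, hq, ![c 0, b, c 1] :: u', by simp [hu', lift_comp], rfl⟩
    · rintro ⟨q, hq, u, hu, rfl⟩
      rcases u with _ | ⟨ℓ, u'⟩
      · simp at hu
      · simp only [List.map_cons, List.cons.injEq] at hu
        obtain ⟨hℓ, hu'⟩ := hu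
        rcases (comp_eq_iff ℓ c).mp hℓ with ⟨b, rfl⟩
        refine ⟨M3.step q ![c 0, b, c 1], ?_, u', hu', rfl⟩
        rw [NFA.mem_stepSet]
        exact ⟨q, hq, b, rfl⟩

lemma projNFA_accepts (M3 : DFA (Fin 3 → Option A) Q) (v : List (Fin 2 → Option A)) :
    v ∈ (projNFA M3).accepts ↔
      ∃ u₀ : List (Fin 3 → Option A), (∀ ℓ ∈ u₀, ℓ 0 = none ∧ ℓ 2 = none) ∧
        ∃ u : List (Fin 3 → Option A), u.map (· ∘ pr) = v ∧ u₀ ++ u ∈ M3.accepts := by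
  rw [NFA.mem_accepts]
  constructor
  · rintro ⟨q', hq', hmem⟩
    rw [projNFA_evalFrom] at hmem
    rcases hmem with ⟨q, ⟨u₀, hu₀, rfl⟩, u, hu, rfl⟩
    refine ⟨u₀, hu₀, u, hu, ?_⟩
    rw [DFA.mem_accepts, DFA.eval, DFA.evalFrom_of_append]
    exact hq'
  · rintro ⟨u₀, hu₀, u, hu, hacc⟩
    rw [DFA.mem_accepts, DFA.eval, DFA.evalFrom_of_append] at hacc
    refine ⟨_, hacc, ?_⟩
    rw [projNFA_evalFrom]
    exact ⟨_, ⟨u₀, hu₀, rfl⟩, u, hu, rfl⟩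


end Stmt4

/-- Every addable ANS is comparable, and every comparable ANS is regular. -/
theorem stmt4 {A : Type} [Fintype A] (S : ANS A) :
    (S.Addable → S.Comparable) ∧ (S.Comparable → S.IsRegularANS) := by
  constructor
  · rintro ⟨Q, instQ, M3, hM3⟩
    haveI := instQ
    haveI : Fintype (Set Q) := Fintype.ofFinite _
    refine ⟨Set Q × Option Bool, inferInstance,
      Stmt4.dfaInter (Stmt4.projNFA M3).toDFA
        (Stmt4.dfaHead fun c : Fin 2 → Option A => c 0 = none ∧ c 1 = none),
      fun w => ?_⟩
    rw [Stmt4.dfaInter_accepts, NFA.toDFA_correct, Stmt4.projNFA_accepts,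
      Stmt4.dfaHead_accepts]
    have hM3' : ∀ u : List (Fin 3 → Option A), u ∈ M3.accepts ↔
        ∃ t : Fin 3 → ℕ, t 0 + t 1 = t 2 ∧ u = padTuple fun i => S.rep (t i) := by
      intro u
      rw [hM3]
      simp only [Set.mem_setOf_eq]
    simp only [hM3']
    rw [Stmt4.key23 S w]
    simp only [Set.mem_setOf_eq]
  · rintro ⟨Q, instQ, M2, hM2⟩
    refine ⟨Q, instQ, Stmt4.dfaComap M2 (fun c => c ∘ Stmt4.pi21), fun w => ?_⟩
    rw [Stmt4.dfaComap_accepts, hM2]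
    have h2 : (w.map fun c => c ∘ Stmt4.pi21) ∈
        { u : List (Fin 2 → Option A) | ∃ t ∈ {t : Fin 2 → ℕ | t 0 ≤ t 1},
          u = padTuple fun i => S.rep (t i) } ↔
        ∃ t : Fin 2 → ℕ, t 0 ≤ t 1 ∧
          (w.map fun c => c ∘ Stmt4.pi21) = padTuple fun i => S.rep (t i) := by
      simp only [Set.mem_setOf_eq]
    rw [h2, Stmt4.key12 S w]
    simp only [Set.mem_setOf_eq, Set.mem_univ]
    constructor
    · rintro ⟨t, hu⟩; exact ⟨t, trivial, hu⟩
    · rintro ⟨t, -, hu⟩; exact ⟨t, hu⟩
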